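/- Let G be a finite simple graph with vertex set V, let k be a positive integer, let T ⊆ V satisfy |Γ_T(Z)| ≥ k − 1 for every Steiner T-cut Z, and fix r ∈ T. Let M be the (nonempty) family of min-cores of the family of demand cuts (Steiner (T,r)-cuts X with |Γ_T(X)| = k − 1), let γ := min_{X ∈ M} |X ∩ T|, assume γ ≥ 1, and set k' := ⌊(k−1)/γ⌋. Then there exist subfamilies M₁, …, M_{2k'+1} ⊆ M with ⋃_{i=1}^{2k'+1} M_i = M such that for each i, every pair of distinct min-cores in M_i is independent. -/

import Mathlib

/-- `nbr G X` is Γ(X): the set of vertices outside `X` adjacent to a vertex of `X`. -/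
def nbr {V : Type*} [Fintype V] [DecidableEq V] (G : SimpleGraph V) [DecidableRel G.Adj]
    (X : Finset V) : Finset V :=
  Finset.univ.filter (fun v => v ∉ X ∧ ∃ u ∈ X, G.Adj u v)

/-- `cl G X` is X⁺ = X ∪ Γ(X). -/
def cl {V : Type*} [Fintype V] [DecidableEq V] (G : SimpleGraph V) [DecidableRel G.Adj]
    (X : Finset V) : Finset V :=
  X ∪ nbr G X

/-- A demand cut: a Steiner (T,r)-cut X with |Γ_T(X)| = k - 1. -/
def IsDemand {V : Type*} [Fintype V] [DecidableEq V] (G : SimpleGraph V) [DecidableRel G.Adj]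
    (T : Finset V) (k : ℕ) (r : V) (X : Finset V) : Prop :=
  (X ∩ T).Nonempty ∧ (T \ cl G X).Nonempty ∧ r ∉ cl G X ∧ (nbr G X ∩ T).card = k - 1

/-- A min-core: a minimal demand cut. -/
def IsMinCore {V : Type*} [Fintype V] [DecidableEq V] (G : SimpleGraph V) [DecidableRel G.Adj]
    (T : Finset V) (k : ℕ) (r : V) (X : Finset V) : Prop :=
  IsDemand G T k r X ∧ ∀ Y : Finset V, IsDemand G T k r Y → Y ⊆ X → Y = X

/-- A core: a demand cut containing exactly one min-core as a subset. -/
def IsCore {V : Type*} [Fintype V] [DecidableEq V] (G : SimpleGraph V) [DecidableRel G.Adj]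
    (T : Finset V) (k : ℕ) (r : V) (X : Finset V) : Prop :=
  IsDemand G T k r X ∧ ∃! Z : Finset V, IsMinCore G T k r Z ∧ Z ⊆ X

/-- The core family C(Z) of a min-core Z: the cores containing Z. -/
def coreFam {V : Type*} [Fintype V] [DecidableEq V] (G : SimpleGraph V) [DecidableRel G.Adj]
    (T : Finset V) (k : ℕ) (r : V) (Z : Finset V) : Set (Finset V) :=
  {X | IsCore G T k r X ∧ Z ⊆ X}

/-- `IsMaxCore G T k r Z X` : X is the maximal element of the core family C(Z). -/
def IsMaxCore {V : Type*} [Fintype V] [DecidableEq V] (G : SimpleGraph V)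
    [DecidableRel G.Adj] (T : Finset V) (k : ℕ) (r : V) (Z X : Finset V) : Prop :=
  X ∈ coreFam G T k r Z ∧ ∀ Y ∈ coreFam G T k r Z, X ⊆ Y → Y = X

/-- Two min-cores Z, W with max-cores Z', W' are independent if
W ∩ T ⊄ Γ(Z') and Z ∩ T ⊄ Γ(W'). -/
def IndepCores {V : Type*} [Fintype V] [DecidableEq V] (G : SimpleGraph V)
    [DecidableRel G.Adj] (T : Finset V) (k : ℕ) (r : V) (Z W : Finset V) : Prop :=
  ∀ Z' W' : Finset V, IsMaxCore G T k r Z Z' → IsMaxCore G T k r W W' →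
    ¬ (W ∩ T ⊆ nbr G Z') ∧ ¬ (Z ∩ T ⊆ nbr G W')


lemma coloring_aux {α : Type*} [DecidableEq α] (d : ℕ) (R : α → α → Prop) [DecidableRel R] :
    ∀ s : Finset α, (∀ a ∈ s, (s.filter (fun b => R a b)).card ≤ d) →
    ∃ c : α → Fin (2 * d + 1), ∀ a ∈ s, ∀ b ∈ s, a ≠ b → (R a b ∨ R b a) → c a ≠ c b := by
  intro s
  induction s using Finset.strongInduction with
  | _ s ih =>
    intro hdeg
    rcases s.eq_empty_or_nonempty with rfl | hne
    · exact ⟨fun _ => ⟨0, by omega⟩, by simp⟩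
    obtain ⟨a, ha, hdega⟩ : ∃ a ∈ s, (s.filter (fun b => R a b ∨ R b a)).card ≤ 2 * d := by
      by_contra h
      push_neg at h
      have hcard : 0 < s.card := Finset.card_pos.2 hne
      have hin : ∑ x ∈ s, (s.filter (fun b => R b x)).card
          = ∑ x ∈ s, (s.filter (fun b => R x b)).card := by
        simp only [Finset.card_filter]
        exact Finset.sum_comm
      have key : s.card * (2 * d + 1) ≤ s.card * (2 * d) := by
        calc s.card * (2 * d + 1) = ∑ _x ∈ s, (2 * d + 1) := by
              rw [Finset.sum_const, smul_eq_mul, mul_comm]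
          _ ≤ ∑ x ∈ s, (s.filter (fun b => R x b ∨ R b x)).card :=
              Finset.sum_le_sum (fun x hx => h x hx)
          _ ≤ ∑ x ∈ s, ((s.filter (fun b => R x b)).card + (s.filter (fun b => R b x)).card) :=
              Finset.sum_le_sum (fun x _hx => by
                rw [Finset.filter_or]; exact Finset.card_union_le _ _)
          _ = ∑ x ∈ s, (s.filter (fun b => R x b)).card
              + ∑ x ∈ s, (s.filter (fun b => R b x)).card := Finset.sum_add_distrib
          _ = ∑ x ∈ s, (s.filter (fun b => R x b)).card
              + ∑ x ∈ s, (s.filter (fun b => R x b)).card := by rw [hin]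
          _ ≤ ∑ _x ∈ s, d + ∑ _x ∈ s, d :=
              Nat.add_le_add (Finset.sum_le_sum hdeg) (Finset.sum_le_sum hdeg)
          _ = s.card * (2 * d) := by rw [Finset.sum_const, smul_eq_mul]; ring
      have := Nat.le_of_mul_le_mul_left key hcard
      omega
    have hssub : s.erase a ⊂ s := Finset.erase_ssubset ha
    have hdeg' : ∀ x ∈ s.erase a, ((s.erase a).filter (fun b => R x b)).card ≤ d := fun x hx =>
      le_trans (Finset.card_le_card
        (Finset.filter_subset_filter _ (Finset.erase_subset _ _))) (hdeg x (Finset.mem_of_mem_erase hx))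
    obtain ⟨c', hc'⟩ := ih (s.erase a) hssub hdeg'
    set N := (s.erase a).filter (fun b => R a b ∨ R b a) with hN
    have hNcard : N.card ≤ 2 * d :=
      le_trans (Finset.card_le_card (Finset.filter_subset_filter _ (Finset.erase_subset _ _))) hdega
    obtain ⟨i, hi⟩ : ∃ i : Fin (2 * d + 1), i ∉ N.image c' := by
      by_contra h
      push_neg at h
      have h1 : (Finset.univ : Finset (Fin (2 * d + 1))).card ≤ (N.image c').card :=
        Finset.card_le_card (fun i _ => h i)
      have h2 := Finset.card_image_le (s := N) (f := c')
      simp only [Finset.card_univ, Fintype.card_fin] at h1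
      omega
    refine ⟨fun x => if x = a then i else c' x, ?_⟩
    intro x hx y hy hxy hRxy
    by_cases hxa : x = a
    · have hya : y ≠ a := fun h => hxy (hxa.trans h.symm)
      have hyN : y ∈ N := Finset.mem_filter.2 ⟨Finset.mem_erase.2 ⟨hya, hy⟩, by
        rw [hxa] at hRxy; exact hRxy⟩
      simp only [if_pos hxa, if_neg hya]
      intro h
      exact hi (by rw [h]; exact Finset.mem_image_of_mem c' hyN)
    · by_cases hya : y = a
      · have hxN : x ∈ N := Finset.mem_filter.2 ⟨Finset.mem_erase.2 ⟨hxa, hx⟩, by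
          rw [hya] at hRxy; exact hRxy.symm⟩
        simp only [if_pos hya, if_neg hxa]
        intro h
        exact hi (by rw [← h]; exact Finset.mem_image_of_mem c' hxN)
      · simp only [if_neg hxa, if_neg hya]
        exact hc' x (Finset.mem_erase.2 ⟨hxa, hx⟩) y (Finset.mem_erase.2 ⟨hya, hy⟩) hxy hRxy

section Lemmas


variable {V : Type*} [Fintype V] [DecidableEq V] (G : SimpleGraph V) [DecidableRel G.Adj]

lemma mem_nbr {X : Finset V} {v : V} : v ∈ nbr G X ↔ v ∉ X ∧ ∃ u ∈ X, G.Adj u v := by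
  simp [nbr]

lemma mem_cl {X : Finset V} {v : V} : v ∈ cl G X ↔ v ∈ X ∨ ∃ u ∈ X, G.Adj u v := by
  simp only [cl, Finset.mem_union, mem_nbr]
  by_cases h : v ∈ X <;> simp [h]

lemma cl_mono {X Y : Finset V} (h : X ⊆ Y) : cl G X ⊆ cl G Y := by
  intro v hv
  rw [mem_cl] at hv ⊢
  rcases hv with hv | ⟨u, hu, hadj⟩
  · exact Or.inl (h hv)
  · exact Or.inr ⟨u, h hu, hadj⟩

lemma cl_union_subset {X Y : Finset V} : cl G (X ∪ Y) ⊆ cl G X ∪ cl G Y := by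
  intro v hv
  simp only [mem_cl, Finset.mem_union] at hv ⊢
  aesop

lemma nbr_submod (A B T : Finset V) :
    (nbr G (A ∪ B) ∩ T).card + (nbr G (A ∩ B) ∩ T).card
      ≤ (nbr G A ∩ T).card + (nbr G B ∩ T).card := by
  have h1 : (nbr G (A ∪ B) ∩ T) ∪ (nbr G (A ∩ B) ∩ T) ⊆ (nbr G A ∩ T) ∪ (nbr G B ∩ T) := by
    intro v hv
    rw [Finset.mem_union] at hv ⊢
    rcases hv with hv | hv <;> rw [Finset.mem_inter, mem_nbr] at hv <;>
      obtain ⟨⟨hvn, u, hu, hadj⟩, hvT⟩ := hv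
    · rw [Finset.mem_union, not_or] at hvn
      rcases Finset.mem_union.1 hu with huA | huB
      · exact Or.inl (Finset.mem_inter.2 ⟨(mem_nbr G).2 ⟨hvn.1, u, huA, hadj⟩, hvT⟩)
      · exact Or.inr (Finset.mem_inter.2 ⟨(mem_nbr G).2 ⟨hvn.2, u, huB, hadj⟩, hvT⟩)
    · rw [Finset.mem_inter] at hu
      by_cases hvA : v ∈ A
      · have hvB : v ∉ B := fun hvB => hvn (Finset.mem_inter.2 ⟨hvA, hvB⟩)
        exact Or.inr (Finset.mem_inter.2 ⟨(mem_nbr G).2 ⟨hvB, u, hu.2, hadj⟩, hvT⟩)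
      · exact Or.inl (Finset.mem_inter.2 ⟨(mem_nbr G).2 ⟨hvA, u, hu.1, hadj⟩, hvT⟩)
  have h2 : (nbr G (A ∪ B) ∩ T) ∩ (nbr G (A ∩ B) ∩ T) ⊆ (nbr G A ∩ T) ∩ (nbr G B ∩ T) := by
    intro v hv
    rw [Finset.mem_inter] at hv
    obtain ⟨hvU, hvI⟩ := hv
    rw [Finset.mem_inter, mem_nbr] at hvU hvI
    obtain ⟨⟨hvnU, _, _, _⟩, hvT⟩ := hvU
    obtain ⟨⟨_, u, hu, hadj⟩, _⟩ := hvI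
    rw [Finset.mem_union, not_or] at hvnU
    rw [Finset.mem_inter] at hu
    exact Finset.mem_inter.2 ⟨Finset.mem_inter.2 ⟨(mem_nbr G).2 ⟨hvnU.1, u, hu.1, hadj⟩, hvT⟩,
      Finset.mem_inter.2 ⟨(mem_nbr G).2 ⟨hvnU.2, u, hu.2, hadj⟩, hvT⟩⟩
  calc (nbr G (A ∪ B) ∩ T).card + (nbr G (A ∩ B) ∩ T).card
      = ((nbr G (A ∪ B) ∩ T) ∪ (nbr G (A ∩ B) ∩ T)).card
        + ((nbr G (A ∪ B) ∩ T) ∩ (nbr G (A ∩ B) ∩ T)).card :=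
        (Finset.card_union_add_card_inter _ _).symm
    _ ≤ ((nbr G A ∩ T) ∪ (nbr G B ∩ T)).card + ((nbr G A ∩ T) ∩ (nbr G B ∩ T)).card :=
        Nat.add_le_add (Finset.card_le_card h1) (Finset.card_le_card h2)
    _ = (nbr G A ∩ T).card + (nbr G B ∩ T).card := Finset.card_union_add_card_inter _ _

lemma uncross {T : Finset V} {k : ℕ} {r : V}
    (hTconn : ∀ Z : Finset V, (Z ∩ T).Nonempty → (T \ cl G Z).Nonempty →
      k - 1 ≤ (nbr G Z ∩ T).card)
    (hr : r ∈ T) {X Y : Finset V}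
    (hX : IsDemand G T k r X) (hY : IsDemand G T k r Y) (hXY : (X ∩ Y ∩ T).Nonempty) :
    IsDemand G T k r (X ∩ Y) ∧ IsDemand G T k r (X ∪ Y) := by
  obtain ⟨hXne, hXT, hXr, hXcard⟩ := hX
  obtain ⟨hYne, hYT, hYr, hYcard⟩ := hY
  have hrI : r ∉ cl G (X ∩ Y) := fun h => hXr (cl_mono G Finset.inter_subset_left h)
  have hrU : r ∉ cl G (X ∪ Y) := fun h => by
    rcases Finset.mem_union.1 (cl_union_subset G h) with h' | h'
    exacts [hXr h', hYr h']
  have hTI : (T \ cl G (X ∩ Y)).Nonempty := by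
    obtain ⟨t, ht⟩ := hXT
    rw [Finset.mem_sdiff] at ht
    exact ⟨t, Finset.mem_sdiff.2 ⟨ht.1, fun h => ht.2 (cl_mono G Finset.inter_subset_left h)⟩⟩
  have hTU : (T \ cl G (X ∪ Y)).Nonempty := ⟨r, Finset.mem_sdiff.2 ⟨hr, hrU⟩⟩
  have hUne : ((X ∪ Y) ∩ T).Nonempty :=
    hXne.mono (Finset.inter_subset_inter Finset.subset_union_left le_rfl)
  have hIle := hTconn (X ∩ Y) hXY hTI
  have hUle := hTconn (X ∪ Y) hUne hTU
  have hsub := nbr_submod G X Y T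
  exact ⟨⟨hXY, hTI, hrI, by omega⟩, ⟨hUne, hTU, hrU, by omega⟩⟩

variable {T : Finset V} {k : ℕ} {r : V}
variable (hTconn : ∀ Z : Finset V, (Z ∩ T).Nonempty → (T \ cl G Z).Nonempty →
      k - 1 ≤ (nbr G Z ∩ T).card) (hr : r ∈ T)

include hTconn hr

lemma mincore_disj {Z W : Finset V} (hZ : IsMinCore G T k r Z) (hW : IsMinCore G T k r W)
    (hne : Z ≠ W) : Disjoint (Z ∩ T) (W ∩ T) := by
  rw [Finset.disjoint_left]
  intro t htZ htW
  rw [Finset.mem_inter] at htZ htW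
  have hIT : (Z ∩ W ∩ T).Nonempty :=
    ⟨t, Finset.mem_inter.2 ⟨Finset.mem_inter.2 ⟨htZ.1, htW.1⟩, htZ.2⟩⟩
  have hI := (uncross G hTconn hr hZ.1 hW.1 hIT).1
  have h1 := hZ.2 _ hI Finset.inter_subset_left
  have h2 := hW.2 _ hI Finset.inter_subset_right
  exact hne (h1.symm.trans h2)

omit hTconn hr in
lemma mincore_isCore {Z : Finset V} (hZ : IsMinCore G T k r Z) : IsCore G T k r Z :=
  ⟨hZ.1, Z, ⟨hZ, Finset.Subset.refl Z⟩, fun Y hY => hZ.2 Y hY.1.1 hY.2⟩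

lemma coreFam_union {Z X Y : Finset V} (hZ : IsMinCore G T k r Z)
    (hX : X ∈ coreFam G T k r Z) (hY : Y ∈ coreFam G T k r Z) :
    X ∪ Y ∈ coreFam G T k r Z := by
  obtain ⟨⟨hXd, hXu⟩, hZX⟩ := hX
  obtain ⟨⟨hYd, hYu⟩, hZY⟩ := hY
  have hIT : (X ∩ Y ∩ T).Nonempty :=
    hZ.1.1.mono (Finset.inter_subset_inter (Finset.subset_inter hZX hZY) le_rfl)
  have hU := (uncross G hTconn hr hXd hYd hIT).2
  refine ⟨⟨hU, Z, ⟨hZ, hZX.trans Finset.subset_union_left⟩, ?_⟩,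
    hZX.trans Finset.subset_union_left⟩
  rintro W ⟨hW, hWU⟩
  obtain ⟨t, ht⟩ := hW.1.1
  rw [Finset.mem_inter] at ht
  rcases Finset.mem_union.1 (hWU ht.1) with htX | htY
  · have hWX : (W ∩ X ∩ T).Nonempty :=
      ⟨t, Finset.mem_inter.2 ⟨Finset.mem_inter.2 ⟨ht.1, htX⟩, ht.2⟩⟩
    have hWXd := (uncross G hTconn hr hW.1 hXd hWX).1
    have heq : W ∩ X = W := hW.2 _ hWXd Finset.inter_subset_left
    have hWsub : W ⊆ X := by rw [← heq]; exact Finset.inter_subset_right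
    obtain ⟨C, _hC, hCuniq⟩ := hXu
    exact (hCuniq W ⟨hW, hWsub⟩).trans (hCuniq Z ⟨hZ, hZX⟩).symm
  · have hWY : (W ∩ Y ∩ T).Nonempty :=
      ⟨t, Finset.mem_inter.2 ⟨Finset.mem_inter.2 ⟨ht.1, htY⟩, ht.2⟩⟩
    have hWYd := (uncross G hTconn hr hW.1 hYd hWY).1
    have heq : W ∩ Y = W := hW.2 _ hWYd Finset.inter_subset_left
    have hWsub : W ⊆ Y := by rw [← heq]; exact Finset.inter_subset_right
    obtain ⟨C, _hC, hCuniq⟩ := hYu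
    exact (hCuniq W ⟨hW, hWsub⟩).trans (hCuniq Z ⟨hZ, hZY⟩).symm

lemma existsUnique_maxCore {Z : Finset V} (hZ : IsMinCore G T k r Z) :
    ∃! X, IsMaxCore G T k r Z X := by
  classical
  set s : Finset (Finset V) := Finset.univ.filter (fun X => X ∈ coreFam G T k r Z) with hs
  have hmem : ∀ X, X ∈ s ↔ X ∈ coreFam G T k r Z := by intro X; simp [hs]
  have hZs : Z ∈ s := (hmem Z).2 ⟨mincore_isCore G hZ, Finset.Subset.refl Z⟩
  obtain ⟨X, hXs, hmax⟩ := s.exists_maximal ⟨Z, hZs⟩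
  have hXmc : IsMaxCore G T k r Z X := by
    refine ⟨(hmem X).1 hXs, fun Y hY hXY => ?_⟩
    by_contra hne
    exact hne (le_antisymm (hmax ((hmem Y).2 hY) hXY) hXY)
  refine ⟨X, hXmc, fun Y hYmc => ?_⟩
  have hU : X ∪ Y ∈ coreFam G T k r Z := coreFam_union G hTconn hr hZ hXmc.1 hYmc.1
  have e1 : X ∪ Y = X := hXmc.2 _ hU Finset.subset_union_left
  have e2 : X ∪ Y = Y := hYmc.2 _ hU Finset.subset_union_right
  exact e2.symm.trans e1

end Lemmas

theorem stmt_14 {V : Type*} [Fintype V] [DecidableEq V]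
    (G : SimpleGraph V) [DecidableRel G.Adj] (k : ℕ) (hk : 1 ≤ k)
    (T : Finset V)
    -- |Γ_T(Z)| ≥ k-1 for every Steiner T-cut Z
    (hTconn : ∀ Z : Finset V, (Z ∩ T).Nonempty → (T \ cl G Z).Nonempty →
      k - 1 ≤ (nbr G Z ∩ T).card)
    (r : V) (hr : r ∈ T)
    -- M is the (nonempty) family of min-cores
    (hMne : {X : Finset V | IsMinCore G T k r X}.Nonempty)
    -- γ = min over min-cores X of |X ∩ T|, and γ ≥ 1
    (γ : ℕ) (hγpos : 1 ≤ γ)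
    (hγle : ∀ X : Finset V, IsMinCore G T k r X → γ ≤ (X ∩ T).card)
    (hγmem : ∃ X : Finset V, IsMinCore G T k r X ∧ (X ∩ T).card = γ) :
    -- decomposition of M into 2⌊(k-1)/γ⌋+1 pairwise independent subfamilies
    ∃ Ms : Fin (2 * ((k - 1) / γ) + 1) → Set (Finset V),
      (∀ i, Ms i ⊆ {X : Finset V | IsMinCore G T k r X}) ∧
      (⋃ i, Ms i) = {X : Finset V | IsMinCore G T k r X} ∧
      ∀ i, ∀ Z ∈ Ms i, ∀ W ∈ Ms i, Z ≠ W → IndepCores G T k r Z W := by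
  classical
  have hmx : ∀ Z : Finset V, IsMinCore G T k r Z → ∃! X, IsMaxCore G T k r Z X :=
    fun Z hZ => existsUnique_maxCore G hTconn hr hZ
  set mc : Finset V → Finset V := fun Z =>
    if h : IsMinCore G T k r Z then (hmx Z h).choose else ∅ with hmc
  have hmc1 : ∀ Z, IsMinCore G T k r Z → IsMaxCore G T k r Z (mc Z) := by
    intro Z h
    simp only [hmc, dif_pos h]
    exact (hmx Z h).choose_spec.1
  have hmc2 : ∀ Z, IsMinCore G T k r Z → ∀ X, IsMaxCore G T k r Z X → X = mc Z := by
    intro Z h X hX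
    simp only [hmc, dif_pos h]
    exact (hmx Z h).choose_spec.2 X hX
  set sM : Finset (Finset V) := Finset.univ.filter (fun X => IsMinCore G T k r X) with hsM
  have hsMmem : ∀ X, X ∈ sM ↔ IsMinCore G T k r X := fun X => by simp [hsM]
  have hdegbound : ∀ Z ∈ sM, (sM.filter (fun W => W ∩ T ⊆ nbr G (mc Z))).card ≤ (k - 1) / γ := by
    intro Z hZs
    have hZ := (hsMmem Z).1 hZs
    have hmax := hmc1 Z hZ
    have hcard : (nbr G (mc Z) ∩ T).card = k - 1 := hmax.1.1.1.2.2.2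
    set D := sM.filter (fun W => W ∩ T ⊆ nbr G (mc Z)) with hD
    have hmemD : ∀ W ∈ D, IsMinCore G T k r W ∧ W ∩ T ⊆ nbr G (mc Z) := by
      intro W hW
      have h := Finset.mem_filter.1 hW
      exact ⟨(hsMmem W).1 h.1, h.2⟩
    have hdisj : ∀ W₁ ∈ D, ∀ W₂ ∈ D, W₁ ≠ W₂ → Disjoint (W₁ ∩ T) (W₂ ∩ T) :=
      fun W₁ h1 W₂ h2 hne =>
        mincore_disj G hTconn hr (hmemD W₁ h1).1 (hmemD W₂ h2).1 hne
    have hbi : (D.biUnion (fun W => W ∩ T)).card = ∑ W ∈ D, (W ∩ T).card :=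
      Finset.card_biUnion hdisj
    have hsubU : D.biUnion (fun W => W ∩ T) ⊆ nbr G (mc Z) ∩ T := by
      intro v hv
      obtain ⟨W, hW, hv⟩ := Finset.mem_biUnion.1 hv
      exact Finset.mem_inter.2 ⟨(hmemD W hW).2 hv, (Finset.mem_inter.1 hv).2⟩
    have hlow : D.card * γ ≤ ∑ W ∈ D, (W ∩ T).card := by
      have := Finset.card_nsmul_le_sum D (fun W => (W ∩ T).card) γ
        (fun W hW => hγle W (hmemD W hW).1)
      simpa [smul_eq_mul] using this
    have hup : (D.biUnion (fun W => W ∩ T)).card ≤ k - 1 := by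
      rw [← hcard]; exact Finset.card_le_card hsubU
    rw [Nat.le_div_iff_mul_le hγpos]
    omega
  obtain ⟨c, hc⟩ := coloring_aux ((k - 1) / γ)
    (fun Z W => W ∩ T ⊆ nbr G (mc Z)) sM hdegbound
  refine ⟨fun i => {X | IsMinCore G T k r X ∧ c X = i}, ?_, ?_, ?_⟩
  · intro i X hX
    exact hX.1
  · ext X
    simp only [Set.mem_iUnion, Set.mem_setOf_eq]
    exact ⟨fun ⟨i, h, _⟩ => h, fun h => ⟨c X, h, rfl⟩⟩
  · intro i Z hZm W hWm hne
    obtain ⟨hZ, hcZ⟩ := hZm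
    obtain ⟨hW, hcW⟩ := hWm
    have hnR : ¬ (W ∩ T ⊆ nbr G (mc Z) ∨ Z ∩ T ⊆ nbr G (mc W)) := fun h =>
      hc Z ((hsMmem Z).2 hZ) W ((hsMmem W).2 hW) hne h (hcZ.trans hcW.symm)
    push_neg at hnR
    intro Z' W' hZ' hW'
    rw [hmc2 Z hZ Z' hZ', hmc2 W hW W' hW']
    exact ⟨hnR.1, hnR.2⟩
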